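/- Let B be a commutative ring, ⊕_{n≥0} I_n W^n ⊆ B[W] a Rees algebra generated as a B-algebra by finitely many homogeneous elements g_{n_1}W^{n_1}, …, g_{n_m}W^{n_m} with all n_i > 0. If N is a common multiple of n_1, …, n_m, then the extension ⊕_{k≥0} I_N^k W^{kN} ⊆ ⊕_{n≥0} I_n W^n is integral, where ⊕ I_N^k W^{kN} is the ordinary Rees ring of the ideal I_N inside B[W^N]. -/

import Mathlib

set_option synthInstance.maxHeartbeats 400000

open Polynomial

/-- The Rees algebra of a filtration `I` of ideals of `B`: the graded
`B`-subalgebra `⊕ₙ Iₙ Wⁿ` of the polynomial ring `B[W]`. -/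
noncomputable def ReesAlg {B : Type*} [CommRing B] (I : ℕ → Ideal B) : Subalgebra B (Polynomial B) :=
  Algebra.adjoin B {p | ∃ n : ℕ, ∃ g ∈ I n, p = C g * X ^ n}

/-- If a Rees algebra `⊕ Iₙ Wⁿ` is generated by finitely many homogeneous elements
`gᵢ W^{nᵢ}` with `nᵢ > 0`, and `N` is a common multiple of the `nᵢ`, then the Rees
algebra is integral over the Rees ring `⊕ I_N^k W^{kN}` of the ideal `I_N` in `B[W^N]`. -/
theorem stmt_2 {B : Type*} [CommRing B] (I : ℕ → Ideal B)
    (h0 : I 0 = ⊤) (hmul : ∀ k s : ℕ, I k * I s ≤ I (k + s))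
    (m : ℕ) (g : Fin m → B) (n : Fin m → ℕ) (hn : ∀ i, 0 < n i)
    (hgI : ∀ i, g i ∈ I (n i))
    (hgen : ReesAlg I = Algebra.adjoin B {p | ∃ i : Fin m, p = C (g i) * X ^ (n i)})
    (N : ℕ) (hN : 0 < N) (hdvd : ∀ i, n i ∣ N) :
    ∀ p ∈ ReesAlg I,
      IsIntegral (Algebra.adjoin B ((fun a : B => C a * X ^ N) '' (I N : Set B))) p := by
  intro p hp
  set R := Algebra.adjoin B ((fun a : B => C a * X ^ N) '' (I N : Set B)) with hR
  have hpow : ∀ (s k : ℕ), 0 < k → (I s) ^ k ≤ I (s * k) := by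
    intro s k hk
    induction k with
    | zero => exact absurd hk (lt_irrefl 0)
    | succ k ih =>
      rcases Nat.eq_zero_or_pos k with h | h
      · subst h; simp [pow_one]
      · calc (I s) ^ (k + 1) = (I s) ^ k * I s := pow_succ _ _
          _ ≤ I (s * k) * I s := Ideal.mul_mono_left (ih h)
          _ ≤ I (s * k + s) := hmul _ _
          _ = I (s * (k + 1)) := by ring_nf
  have key : Algebra.adjoin B {p | ∃ i : Fin m, p = C (g i) * X ^ (n i)} ≤
      (integralClosure R (Polynomial B)).restrictScalars B := by
    apply Algebra.adjoin_le
    rintro _ ⟨i, rfl⟩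
    obtain ⟨k, hk⟩ := hdvd i
    have hkpos : 0 < k := by
      rcases Nat.eq_zero_or_pos k with h | h
      · exfalso; rw [h, Nat.mul_zero] at hk; exact (Nat.lt_irrefl 0 (hk ▸ hN))
      · exact h
    have hmem : g i ^ k ∈ I N := by
      rw [hk]
      exact hpow (n i) k hkpos (Ideal.pow_mem_pow (hgI i) k)
    have hr : (C (g i ^ k) * X ^ N : Polynomial B) ∈ R := by
      exact Algebra.subset_adjoin ⟨g i ^ k, hmem, rfl⟩
    refine ⟨X ^ k - Polynomial.C (⟨_, hr⟩ : R), Polynomial.monic_X_pow_sub_C _ hkpos.ne', ?_⟩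
    have : ((C (g i) * X ^ (n i) : Polynomial B)) ^ k = C (g i ^ k) * X ^ N := by
      rw [mul_pow, ← C_pow, ← pow_mul, ← hk]
    simp [Polynomial.eval₂_sub, this]
  exact key (hgen ▸ hp)
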